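/- Let h be analytic at 0 with h(x) = x + h_m x^m + O(x^{m+1}), h_m < 0, m ≥ 2. Then for x > 0 sufficiently small, the iterates h^{[n]}(x) satisfy lim_{n→∞} n^{1/(m−1)} · h^{[n]}(x) = (−h_m(m−1))^{−1/(m−1)}. -/

import Mathlib

open Filter Topology

section ThronAux

open Asymptotics Finset


lemma thron_pow_bounds (j : ℕ) {a b : ℝ} (ha : 0 < a) (hab : a ≤ b) :
    ((j : ℝ) + 1) * (b - a) / (a * b ^ (j + 1)) ≤ (a ^ (j + 1))⁻¹ - (b ^ (j + 1))⁻¹ ∧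
      (a ^ (j + 1))⁻¹ - (b ^ (j + 1))⁻¹ ≤ ((j : ℝ) + 1) * (b - a) / (a ^ (j + 1) * b) := by
  have hb : 0 < b := ha.trans_le hab
  have hapow : (0:ℝ) < a ^ (j+1) := pow_pos ha _
  have hbpow : (0:ℝ) < b ^ (j+1) := pow_pos hb _
  have hD : (0:ℝ) < a ^ (j+1) * b ^ (j+1) := mul_pos hapow hbpow
  have hS : b ^ (j+1) - a ^ (j+1) = (∑ i ∈ Finset.range (j+1), b ^ i * a ^ (j - i)) * (b - a) := by
    rw [← geom_sum₂_mul b a (j+1)]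
    norm_num
  have hlow : ((j:ℝ)+1) * a ^ j ≤ ∑ i ∈ Finset.range (j+1), b ^ i * a ^ (j - i) := by
    calc ((j:ℝ)+1) * a ^ j = ∑ _i ∈ Finset.range (j+1), a ^ j := by
          rw [Finset.sum_const, Finset.card_range, nsmul_eq_mul]; push_cast; ring
      _ ≤ _ := by
          refine Finset.sum_le_sum fun i hi => ?_
          have hij : i ≤ j := by simpa using Nat.lt_succ_iff.mp (Finset.mem_range.mp hi)
          have : a ^ j = a ^ i * a ^ (j - i) := by rw [← pow_add]; congr 1; omega
          rw [this]
          exact mul_le_mul_of_nonneg_right (pow_le_pow_left₀ ha.le hab i)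
            (pow_nonneg ha.le _)
  have hhigh : (∑ i ∈ Finset.range (j+1), b ^ i * a ^ (j - i)) ≤ ((j:ℝ)+1) * b ^ j := by
    calc (∑ i ∈ Finset.range (j+1), b ^ i * a ^ (j - i))
        ≤ ∑ _i ∈ Finset.range (j+1), b ^ j := by
          refine Finset.sum_le_sum fun i hi => ?_
          have hij : i ≤ j := Nat.lt_succ_iff.mp (Finset.mem_range.mp hi)
          have : b ^ j = b ^ i * b ^ (j - i) := by rw [← pow_add]; congr 1; omega
          rw [this]
          exact mul_le_mul_of_nonneg_left (pow_le_pow_left₀ ha.le hab _) (pow_nonneg hb.le _)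
      _ = ((j:ℝ)+1) * b ^ j := by
          rw [Finset.sum_const, Finset.card_range, nsmul_eq_mul]; push_cast; ring
  have hdiff : (a ^ (j+1))⁻¹ - (b ^ (j+1))⁻¹ = (b^(j+1) - a^(j+1)) / (a^(j+1) * b^(j+1)) := by
    field_simp
  constructor
  · rw [hdiff, show ((j : ℝ) + 1) * (b - a) / (a * b ^ (j + 1))
        = (((j:ℝ)+1) * a ^ j * (b - a)) / (a^(j+1) * b^(j+1)) by
      rw [pow_succ a j]; field_simp]
    rw [hS]
    gcongr <;> first | exact sub_nonneg.2 hab | exact hlow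
  · rw [hdiff, show ((j : ℝ) + 1) * (b - a) / (a ^ (j + 1) * b)
        = (((j:ℝ)+1) * b ^ j * (b - a)) / (a^(j+1) * b^(j+1)) by
      rw [pow_succ b j]; field_simp]
    rw [hS]
    gcongr <;> first | exact sub_nonneg.2 hab | exact hhigh


lemma thron_limits_aux (m : ℕ) (hm : 2 ≤ m) (c : ℝ) (h : ℝ → ℝ)
    (hexp : (fun x : ℝ => h x - x - c * x ^ m) =O[𝓝 0] fun x : ℝ => x ^ (m + 1)) :
    Tendsto (fun y : ℝ => (y - h y) / y ^ m) (𝓝[>] 0) (𝓝 (-c)) ∧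
      Tendsto (fun y : ℝ => h y / y) (𝓝[>] 0) (𝓝 1) := by
  have hxid : (fun x : ℝ => x) =o[𝓝 (0:ℝ)] (fun _ : ℝ => (1:ℝ)) :=
    (isLittleO_one_iff ℝ).2 tendsto_id
  have ho : (fun x : ℝ => x ^ (m+1)) =o[𝓝 (0:ℝ)] (fun x : ℝ => x ^ m) := by
    have := hxid.mul_isBigO (isBigO_refl (fun x : ℝ => x ^ m) (𝓝 0))
    refine this.congr (fun x => ?_) (fun x => one_mul _)
    rw [← pow_succ']
  have hlo : (fun x : ℝ => h x - x - c * x ^ m) =o[𝓝 (0:ℝ)] (fun x : ℝ => x ^ m) :=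
    hexp.trans_isLittleO ho
  have h1 : Tendsto (fun x : ℝ => (h x - x - c * x ^ m) / x ^ m) (𝓝 0) (𝓝 0) :=
    hlo.tendsto_div_nhds_zero
  have hxm1 : (fun x : ℝ => x ^ (m-1)) =o[𝓝 (0:ℝ)] (fun _ : ℝ => (1:ℝ)) := by
    refine (isLittleO_one_iff ℝ).2 ?_
    simpa [zero_pow (by omega : m - 1 ≠ 0)] using (continuous_pow (m-1)).tendsto (0:ℝ)
  have hxm : (fun x : ℝ => x ^ m) =o[𝓝 (0:ℝ)] (fun x : ℝ => x) := by
    have := hxm1.mul_isBigO (isBigO_refl (fun x : ℝ => x) (𝓝 0))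
    refine this.congr (fun x => ?_) (fun x => one_mul _)
    rw [← pow_succ]
    congr 1
    omega
  have hsum : (fun x : ℝ => h x - x) =o[𝓝 (0:ℝ)] (fun x : ℝ => x) := by
    have := (hlo.trans hxm).add (hxm.const_mul_left c)
    simpa using this
  have h2 : Tendsto (fun x : ℝ => (h x - x) / x) (𝓝 0) (𝓝 0) :=
    hsum.tendsto_div_nhds_zero
  constructor
  · have := (tendsto_const_nhds (α := ℝ) (x := -c) (f := 𝓝[>] (0:ℝ))).sub
      (h1.mono_left nhdsWithin_le_nhds)
    rw [sub_zero] at this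
    refine this.congr' ?_
    filter_upwards [self_mem_nhdsWithin] with y hy
    have hym : (y:ℝ) ^ m ≠ 0 := pow_ne_zero _ (ne_of_gt hy)
    field_simp
    ring
  · have := (tendsto_const_nhds (α := ℝ) (x := 1) (f := 𝓝[>] (0:ℝ))).add
      (h2.mono_left nhdsWithin_le_nhds)
    rw [add_zero] at this
    refine this.congr' ?_
    filter_upwards [self_mem_nhdsWithin] with y hy
    have hy0 : (y:ℝ) ≠ 0 := ne_of_gt hy
    field_simp
    ring

end ThronAux

set_option maxHeartbeats 1000000 in
/-- Thron's theorem: if `h` is analytic at `0` with `h x = x + c·x^m + O(x^{m+1})`,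
`c < 0`, `m ≥ 2`, then for `x > 0` sufficiently small,
`n^{1/(m-1)} · h^[n](x) → (-c (m-1))^{-1/(m-1)}` as `n → ∞`. -/
theorem thron_limit (m : ℕ) (hm : 2 ≤ m) (c : ℝ) (hc : c < 0) (h : ℝ → ℝ)
    (hanal : AnalyticAt ℝ h 0)
    (hexp : (fun x : ℝ => h x - x - c * x ^ m) =O[𝓝 0] fun x : ℝ => x ^ (m + 1)) :
    ∃ ε > 0, ∀ x : ℝ, 0 < x → x < ε →
      Tendsto (fun n : ℕ => (n : ℝ) ^ ((1 : ℝ) / (m - 1)) * h^[n] x) atTop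
        (𝓝 ((-c * ((m : ℝ) - 1)) ^ (-(1 : ℝ) / ((m : ℝ) - 1)))) := by
  obtain ⟨haux1, haux2⟩ := thron_limits_aux m hm c h hexp
  obtain ⟨j, hkj⟩ : ∃ j : ℕ, m - 1 = j + 1 := ⟨m - 2, by omega⟩
  set k : ℕ := m - 1 with hkdef
  have hkm : m = k + 1 := by omega
  have hmR : (2:ℝ) ≤ (m:ℝ) := by exact_mod_cast hm
  have hkR : (k : ℝ) = (m : ℝ) - 1 := by rw [hkm]; push_cast; ring
  have hkR0 : (0:ℝ) < (m:ℝ) - 1 := by linarith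
  -- get the constant
  obtain ⟨C₀, hC₀⟩ := Asymptotics.isBigO_iff.mp hexp
  set C := max C₀ 1 with hCdef
  have hC1 : (0:ℝ) < C := lt_of_lt_of_le one_pos (le_max_right _ _)
  have hCbd : ∀ᶠ x in 𝓝 (0:ℝ), |h x - x - c * x ^ m| ≤ C * |x| ^ (m+1) := by
    filter_upwards [hC₀] with x hx
    rw [Real.norm_eq_abs, Real.norm_eq_abs, abs_pow] at hx
    exact hx.trans (mul_le_mul_of_nonneg_right (le_max_left _ _) (by positivity))
  obtain ⟨δ, hδ0, hδ⟩ := Metric.eventually_nhds_iff.mp hCbd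
  set ε : ℝ := min δ (min (-c/(2*C)) (min 1 (1/(C - c + 1)))) with hεdef
  have hε0 : 0 < ε := by
    refine lt_min hδ0 (lt_min (div_pos (by linarith) (by positivity)) (lt_min one_pos (div_pos one_pos (by linarith))))
  -- key pointwise estimates
  have key : ∀ y : ℝ, 0 < y → y < ε → 0 < h y ∧ h y ≤ y + c/2 * y^m ∧ h y < y := by
    intro y hy0 hyε
    have hyδ : dist y 0 < δ := by
      rw [Real.dist_eq, sub_zero, abs_of_pos hy0]
      exact hyε.trans_le (min_le_left _ _)
    have hy2 : y < -c/(2*C) := hyε.trans_le ((min_le_right _ _).trans (min_le_left _ _))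
    have hy1 : y < 1 :=
      hyε.trans_le ((min_le_right _ _).trans ((min_le_right _ _).trans (min_le_left _ _)))
    have hy3 : y < 1/(C - c + 1) :=
      hyε.trans_le ((min_le_right _ _).trans ((min_le_right _ _).trans (min_le_right _ _)))
    have hb := hδ hyδ
    rw [abs_of_pos hy0] at hb
    obtain ⟨hbl, hbu⟩ := abs_le.1 hb
    have hp : (0:ℝ) < y^m := pow_pos hy0 m
    have hpk : (0:ℝ) < y^k := pow_pos hy0 k
    have hym : y^(m+1) = y^m * y := pow_succ y m
    have hymk : y^m = y * y^k := by rw [hkm, pow_succ]; ring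
    have h5 : C * y < -c/2 := by
      have := (lt_div_iff₀ (by positivity : (0:ℝ) < 2*C)).1 hy2
      linarith
    have hupper : h y ≤ y + c/2 * y^m := by
      have h6 : (C * y) * y^m ≤ (-c/2) * y^m :=
        mul_le_mul_of_nonneg_right h5.le hp.le
      nlinarith [hbu]
    refine ⟨?_, hupper, ?_⟩
    · -- positivity of h y
      have hykle : y^k ≤ y := by
        calc y^k = y^(j+1) := by rw [← hkj]
          _ ≤ y^1 := pow_le_pow_of_le_one hy0.le hy1.le (by omega)
          _ = y := pow_one y
      have h8 : (C - c) * y < 1 := by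
        have := (lt_div_iff₀ (by linarith : (0:ℝ) < C - c + 1)).1 hy3
        nlinarith
      have h9 : (C - c) * y^k < 1 := by
        have : (C - c) * y^k ≤ (C - c) * y :=
          mul_le_mul_of_nonneg_left hykle (by linarith)
        linarith
      have hyme : y^(m+1) ≤ y^m := by
        rw [hym]
        exact mul_le_of_le_one_right hp.le hy1.le
      -- h y ≥ y + c y^m - C y^{m+1} ≥ y + (c - C) y^m = y (1 + (c-C) y^k) > 0
      nlinarith [hbl, mul_pos hy0 hpk]
    · nlinarith [hupper]
  -- the iterates
  refine ⟨ε, hε0, ?_⟩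
  intro x hx0 hxε
  set u : ℕ → ℝ := fun n => h^[n] x with hudef
  have hsucc : ∀ n, u (n+1) = h (u n) := fun n => Function.iterate_succ_apply' h n x
  have hu : ∀ n, 0 < u n ∧ u n < ε := by
    intro n
    induction n with
    | zero => exact ⟨hx0, hxε⟩
    | succ n ih =>
      obtain ⟨h1, h2, h3⟩ := key (u n) ih.1 ih.2
      rw [hsucc]
      exact ⟨h1, h3.trans ih.2⟩
  have hlt : ∀ n, u (n+1) < u n := by
    intro n; rw [hsucc]; exact (key (u n) (hu n).1 (hu n).2).2.2
  have hub : ∀ n, u (n+1) ≤ u n + c/2 * (u n)^m := by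
    intro n; rw [hsucc]; exact (key (u n) (hu n).1 (hu n).2).2.1
  have hanti : Antitone u := antitone_nat_of_succ_le fun n => (hlt n).le
  have hbdd : BddBelow (Set.range u) := ⟨0, by rintro y ⟨n, rfl⟩; exact (hu n).1.le⟩
  have hconv := tendsto_atTop_ciInf hanti hbdd
  set L := ⨅ n, u n with hLdef
  have hL0 : 0 ≤ L := le_ciInf fun n => (hu n).1.le
  have hLz : L = 0 := by
    by_contra hne
    have hLpos : 0 < L := lt_of_le_of_ne hL0 (Ne.symm hne)
    have hLle : ∀ n, L ≤ u n := fun n => ciInf_le hbdd n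
    set d : ℝ := (-c/2) * L^m with hddef
    have hd : 0 < d := mul_pos (by linarith) (pow_pos hLpos m)
    have step : ∀ n, u (n+1) ≤ u n - d := by
      intro n
      have h1 : L^m ≤ (u n)^m := pow_le_pow_left₀ hL0 (hLle n) m
      have h2 : c/2 * (u n)^m ≤ c/2 * L^m := mul_le_mul_of_nonpos_left h1 (by linarith)
      have := hub n
      rw [hddef]
      linarith
    have lin : ∀ n : ℕ, u n ≤ u 0 - n * d := by
      intro n
      induction n with
      | zero => simp
      | succ n ih =>
        have := step n
        push_cast
        linarith
    obtain ⟨n, hn⟩ := exists_nat_gt (u 0 / d)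
    have : u 0 < n * d := (div_lt_iff₀ hd).1 hn
    linarith [(hu n).1, lin n]
  have hu0 : Tendsto u atTop (𝓝 0) := hLz ▸ hconv
  have huIoi : Tendsto u atTop (𝓝[>] 0) :=
    tendsto_nhdsWithin_iff.2 ⟨hu0, Eventually.of_forall fun n => (hu n).1⟩
  -- the difference sequence
  set q : ℕ → ℝ := fun n => (u n - u (n+1)) / (u n)^m with hqdef
  have hq : Tendsto q atTop (𝓝 (-c)) := by
    refine (haux1.comp huIoi).congr fun n => ?_
    simp only [Function.comp_apply, hqdef, hsucc n]
  set r : ℕ → ℝ := fun n => u n / u (n+1) with hrdef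
  have hr : Tendsto r atTop (𝓝 1) := by
    have := (haux2.comp huIoi).inv₀ one_ne_zero
    rw [inv_one] at this
    refine this.congr fun n => ?_
    simp only [Function.comp_apply, hrdef, inv_div, hsucc n]
  set v : ℕ → ℝ := fun n => ((u n)^k)⁻¹ with hvdef
  set A : ℝ := -c * ((m:ℝ) - 1) with hAdef
  have hA : 0 < A := mul_pos (by linarith) hkR0
  have hD : Tendsto (fun n => v (n+1) - v n) atTop (𝓝 A) := by
    have hlowlim : Tendsto (fun n => (k:ℝ) * q n * r n) atTop (𝓝 ((k:ℝ) * (-c) * 1)) :=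
      (tendsto_const_nhds.mul hq).mul hr
    have hhighlim : Tendsto (fun n => (k:ℝ) * q n * (r n)^k) atTop (𝓝 ((k:ℝ) * (-c) * 1^k)) :=
      (tendsto_const_nhds.mul hq).mul (hr.pow k)
    have hval : (k:ℝ) * (-c) * 1 = A := by rw [hkR, hAdef]; ring
    have hvalk : (k:ℝ) * (-c) * 1^k = A := by rw [one_pow, hkR, hAdef]; ring
    rw [hval] at hlowlim
    rw [hvalk] at hhighlim
    refine tendsto_of_tendsto_of_tendsto_of_le_of_le hlowlim hhighlim ?_ ?_
    · intro n
      have ha := (hu (n+1)).1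
      have hb := (hu n).1
      have hab := (hlt n).le
      have e1 : (k:ℝ) * q n * r n = (k:ℝ) * (u n - u (n+1)) / (u (n+1) * (u n)^k) := by
        simp only [hqdef, hrdef]
        rw [show (u n)^m = (u n)^k * u n from by rw [hkm, pow_succ]]
        field_simp
      have := (thron_pow_bounds j ha hab).1
      rw [← hkj] at this
      have hcast : ((j:ℝ) + 1) = (k:ℝ) := by rw [hkj]; push_cast; ring
      rw [hcast] at this
      show (k:ℝ) * q n * r n ≤ v (n+1) - v n
      rw [e1]
      exact this
    · intro n
      have ha := (hu (n+1)).1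
      have hb := (hu n).1
      have hab := (hlt n).le
      have e2 : (k:ℝ) * q n * (r n)^k = (k:ℝ) * (u n - u (n+1)) / ((u (n+1))^k * u n) := by
        simp only [hqdef, hrdef]
        rw [show (u n)^m = (u n)^k * u n from by rw [hkm, pow_succ]]
        rw [div_pow]
        field_simp
      have := (thron_pow_bounds j ha hab).2
      rw [← hkj] at this
      have hcast : ((j:ℝ) + 1) = (k:ℝ) := by rw [hkj]; push_cast; ring
      rw [hcast] at this
      show v (n+1) - v n ≤ (k:ℝ) * q n * (r n)^k
      rw [e2]
      exact this
  -- Cesàro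
  have hCes := hD.cesaro
  have hv_div : Tendsto (fun n : ℕ => v n / n) atTop (𝓝 A) := by
    have h1 : Tendsto (fun n : ℕ => (n:ℝ)⁻¹ * (v n - v 0)) atTop (𝓝 A) :=
      hCes.congr fun n => by rw [Finset.sum_range_sub]
    have h2 := h1.add (tendsto_const_div_atTop_nhds_zero_nat (v 0))
    rw [add_zero] at h2
    refine h2.congr fun n => ?_
    rcases eq_or_ne (n:ℝ) 0 with hn | hn
    · simp [hn]
    · field_simp
      ring
  -- conclude via rpow continuity
  have hcont : ContinuousAt (fun y : ℝ => y ^ (-(1:ℝ) / ((m:ℝ) - 1))) A :=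
    Real.continuousAt_rpow_const A _ (Or.inl hA.ne')
  have hfin : Tendsto (fun n : ℕ => (v n / n) ^ (-(1:ℝ) / ((m:ℝ) - 1))) atTop
      (𝓝 (A ^ (-(1:ℝ) / ((m:ℝ) - 1)))) := hcont.tendsto.comp hv_div
  rw [hAdef] at hfin
  refine hfin.congr' ?_
  filter_upwards [eventually_ge_atTop 1] with n hn
  have hn0 : (0:ℝ) < n := by exact_mod_cast hn
  have hun := (hu n).1
  have hpk : (0:ℝ) < (u n)^k := pow_pos hun k
  have hv0 : 0 < v n := inv_pos.2 hpk
  have hre : (-(1:ℝ) / ((m:ℝ) - 1)) = -(1 / ((m:ℝ) - 1)) := by ring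
  calc (v n / n) ^ (-(1:ℝ) / ((m:ℝ) - 1))
      = (v n) ^ (-(1:ℝ) / ((m:ℝ) - 1)) / (n:ℝ) ^ (-(1:ℝ) / ((m:ℝ) - 1)) :=
        Real.div_rpow hv0.le hn0.le _
    _ = (u n) / ((n:ℝ) ^ ((1:ℝ) / ((m:ℝ) - 1)))⁻¹ := by
        congr 1
        · rw [hvdef]
          simp only
          rw [Real.inv_rpow hpk.le, ← Real.rpow_neg hpk.le, hre, neg_neg,
            ← Real.rpow_natCast (u n) k, ← Real.rpow_mul hun.le, hkR,
            mul_one_div, div_self (ne_of_gt hkR0), Real.rpow_one]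
        · rw [hre, Real.rpow_neg hn0.le]
    _ = (n:ℝ) ^ ((1:ℝ) / ((m:ℝ) - 1)) * u n := by
        rw [div_eq_mul_inv, inv_inv, mul_comm]
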